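/- Let Y₋ and S₋ be ℝⁿ-valued random vectors with E[S₋] = 0 componentwise, E[‖S₋‖²] < ∞ and E[‖Y₋‖] < ∞, and let U₀, U₁, …, U_h be i.i.d. ℝⁿ-valued random vectors, each with n i.i.d. standard Gaussian components, independent of (Y₋, S₋). Let y_h be produced by the QVAR(1,1) recursion started at s₋₁ = S₋, y₋₁ = Y₋ with inputs u_k = U_k. Then for all indices i, j ∈ {1, …, n}: E[(y_h)_j · (U₀)_i] = (Φ₁^h Σ_tr)_{j i}. That is, the population coefficient of a linear local projection of each outcome on each observed structural shock coincides with the impulse response of the linear VAR(1) model y_t = Φ₁ y_{t−1} + Σ_tr u_t, so the linear local projection captures none of the nonlinearity of the QVAR(1,1) model. -/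

import Mathlib

open MeasureTheory ProbabilityTheory

/-- The state process of the QVAR(1,1) recursion:
`s k = Φ₁ s (k-1) + Σtr u k`, started at `s (-1) = sInit`.  Here `Str` plays the role
of the matrix `Σ_tr`. -/
def qvarS {n : ℕ} (Φ1 Str : Matrix (Fin n) (Fin n) ℝ) (sInit : Fin n → ℝ)
    (u : ℕ → Fin n → ℝ) : ℕ → Fin n → ℝ
  | 0 => Φ1.mulVec sInit + Str.mulVec (u 0)
  | k + 1 => Φ1.mulVec (qvarS Φ1 Str sInit u k) + Str.mulVec (u (k + 1))

/-- The outcome process of the QVAR(1,1) recursion: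
`y k = Φ₁ y (k-1) + Q (s (k-1) s (k-1)ᵀ) + (1_n + Γ s (k-1)) ⊙ (Σtr u k)`,
where `Q` is a linear map encoding the quadratic term `Φ₂ · vech(s sᵀ)` and `⊙` is the
entrywise (Hadamard) product; started at `s (-1) = sInit`, `y (-1) = yInit`. -/
def qvarY {n : ℕ} (Φ1 Γ Str : Matrix (Fin n) (Fin n) ℝ)
    (Q : Matrix (Fin n) (Fin n) ℝ →ₗ[ℝ] (Fin n → ℝ))
    (sInit yInit : Fin n → ℝ) (u : ℕ → Fin n → ℝ) : ℕ → Fin n → ℝ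
  | 0 => Φ1.mulVec yInit + Q (Matrix.vecMulVec sInit sInit)
      + fun i => (1 + Γ.mulVec sInit i) * Str.mulVec (u 0) i
  | k + 1 => Φ1.mulVec (qvarY Φ1 Γ Str Q sInit yInit u k)
      + Q (Matrix.vecMulVec (qvarS Φ1 Str sInit u k) (qvarS Φ1 Str sInit u k))
      + fun i => (1 + Γ.mulVec (qvarS Φ1 Str sInit u k) i) * Str.mulVec (u (k + 1)) i

section QlpAux
open Real
open scoped ENNReal NNReal


lemma pow_le_exp_aux (m : ℕ) (t : ℝ) (ht : 0 ≤ t) : t ^ m / m.factorial ≤ Real.exp t := by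
  calc t ^ m / m.factorial ≤ ∑ i ∈ Finset.range (m+1), t ^ i / i.factorial := by
        refine Finset.single_le_sum (f := fun i => t ^ i / (i.factorial : ℝ)) ?_ (Finset.self_mem_range_succ m)
        intro i _
        positivity
    _ ≤ Real.exp t := Real.sum_le_exp_of_nonneg ht _

lemma integrable_pow_mul_gaussAux (m : ℕ) :
    Integrable (fun x : ℝ => x ^ m * Real.exp (-x^2/2)) := by
  have hC : Integrable (fun x : ℝ => ((m.factorial : ℝ) * 4 ^ m + 1) * Real.exp (-(4⁻¹) * x ^ 2)) :=
    (integrable_exp_neg_mul_sq (by norm_num)).const_mul _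
  refine hC.mono' ?_ (ae_of_all _ fun x => ?_)
  · exact ((measurable_id.pow_const m).mul
      (((measurable_id.pow_const 2).neg.div_const 2).exp)).aestronglyMeasurable
  · have hx2 : (0:ℝ) ≤ x ^ 2 / 4 := by positivity
    have h1 := pow_le_exp_aux m (x ^ 2 / 4) hx2
    have hfac : (0:ℝ) < m.factorial := by positivity
    have key : |x| ^ m * Real.exp (-(4⁻¹) * x ^ 2) ≤ (m.factorial : ℝ) * 4 ^ m + 1 := by
      rcases le_or_gt (|x|) 1 with hx | hx
      · have h1' : |x| ^ m ≤ 1 := pow_le_one₀ (abs_nonneg x) hx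
        have h2' : Real.exp (-(4⁻¹) * x ^ 2) ≤ 1 := by
          rw [Real.exp_le_one_iff]; nlinarith [sq_nonneg x]
        nlinarith [pow_nonneg (abs_nonneg x) m, Real.exp_pos (-(4⁻¹) * x ^ 2), hfac,
          pow_pos (by norm_num : (0:ℝ) < 4) m]
      · have hxm : |x| ^ m ≤ (x ^ 2) ^ m := by
          calc |x| ^ m ≤ (|x| ^ 2) ^ m := by
                refine pow_le_pow_left₀ (abs_nonneg x) ?_ m
                nlinarith
            _ = (x ^ 2) ^ m := by rw [sq_abs]
        have h3 : (x ^ 2 / 4) ^ m ≤ (m.factorial : ℝ) * Real.exp (x ^ 2 / 4) := by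
          rw [div_le_iff₀ hfac] at h1; linarith [h1]
        have h4 : (x ^ 2) ^ m ≤ (m.factorial : ℝ) * 4 ^ m * Real.exp (x ^ 2 / 4) := by
          have hd : (x ^ 2 / 4) ^ m = (x ^ 2) ^ m / 4 ^ m := by rw [div_pow]
          rw [hd, div_le_iff₀ (by positivity : (0:ℝ) < 4 ^ m)] at h3
          nlinarith [h3]
        have h5 : |x| ^ m ≤ (m.factorial : ℝ) * 4 ^ m * Real.exp (x ^ 2 / 4) := le_trans hxm h4
        have h6 : |x| ^ m * Real.exp (-(4⁻¹) * x ^ 2)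
            ≤ ((m.factorial : ℝ) * 4 ^ m * Real.exp (x ^ 2 / 4)) * Real.exp (-(4⁻¹) * x ^ 2) :=
          mul_le_mul_of_nonneg_right h5 (Real.exp_pos _).le
        have h7 : ((m.factorial : ℝ) * 4 ^ m * Real.exp (x ^ 2 / 4)) * Real.exp (-(4⁻¹) * x ^ 2)
            = (m.factorial : ℝ) * 4 ^ m := by
          rw [mul_assoc, ← Real.exp_add]
          have : x ^ 2 / 4 + -(4⁻¹) * x ^ 2 = 0 := by ring
          rw [this, Real.exp_zero, mul_one]
        rw [h7] at h6
        linarith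
    have hnorm : ‖x ^ m * Real.exp (-x ^ 2 / 2)‖ = |x| ^ m * Real.exp (-x ^ 2 / 2) := by
      rw [norm_mul, norm_pow, Real.norm_eq_abs, Real.norm_eq_abs, abs_of_pos (Real.exp_pos _)]
    rw [hnorm]
    have hprod : Real.exp (-x ^ 2 / 2) = Real.exp (-(4⁻¹) * x ^ 2) * Real.exp (-(4⁻¹) * x ^ 2) := by
      rw [← Real.exp_add]; ring_nf
    rw [hprod]
    calc |x| ^ m * (Real.exp (-(4⁻¹) * x ^ 2) * Real.exp (-(4⁻¹) * x ^ 2))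
        = (|x| ^ m * Real.exp (-(4⁻¹) * x ^ 2)) * Real.exp (-(4⁻¹) * x ^ 2) := by ring
      _ ≤ ((m.factorial : ℝ) * 4 ^ m + 1) * Real.exp (-(4⁻¹) * x ^ 2) :=
          mul_le_mul_of_nonneg_right key (Real.exp_pos _).le


lemma gaussPDFReal_zero_one (x : ℝ) :
    gaussianPDFReal 0 1 x = (Real.sqrt (2 * π))⁻¹ * Real.exp (-x ^ 2 / 2) := by
  simp [gaussianPDFReal]

lemma gaussReal_eq : gaussianReal 0 1
    = (volume : Measure ℝ).withDensity (fun x => ((gaussianPDFReal 0 1 x).toNNReal : ℝ≥0∞)) := by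
  rw [gaussianReal_of_var_ne_zero 0 one_ne_zero]
  rfl

lemma gauss_integral (g : ℝ → ℝ) :
    ∫ x, g x ∂(gaussianReal 0 1) = ∫ x, gaussianPDFReal 0 1 x * g x := by
  rw [gaussReal_eq, integral_withDensity_eq_integral_smul
    ((measurable_gaussianPDFReal 0 1).real_toNNReal) g]
  congr 1
  ext x
  rw [NNReal.smul_def, Real.coe_toNNReal _ (gaussianPDFReal_nonneg 0 1 x)]
  rfl

lemma gauss_integrable_iff (g : ℝ → ℝ) (hg : AEStronglyMeasurable g volume) :
    Integrable g (gaussianReal 0 1)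
      ↔ Integrable (fun x => gaussianPDFReal 0 1 x * g x) volume := by
  rw [gaussReal_eq, integrable_withDensity_iff_integrable_smul
    ((measurable_gaussianPDFReal 0 1).real_toNNReal)]
  have heq : ∀ x : ℝ, (gaussianPDFReal 0 1 x).toNNReal • g x = gaussianPDFReal 0 1 x * g x := by
    intro x
    rw [NNReal.smul_def, Real.coe_toNNReal _ (gaussianPDFReal_nonneg 0 1 x), smul_eq_mul]
  constructor
  · intro h
    exact h.congr (ae_of_all _ fun x => heq x)
  · intro h
    exact h.congr (ae_of_all _ fun x => (heq x).symm)


lemma gauss_integrable_pow (m : ℕ) :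
    Integrable (fun x : ℝ => x ^ m) (gaussianReal 0 1) := by
  rw [gauss_integrable_iff _ (by fun_prop : Measurable fun x : ℝ => x ^ m).aestronglyMeasurable]
  refine ((integrable_pow_mul_gaussAux m).const_mul ((Real.sqrt (2 * π))⁻¹)).congr
    (ae_of_all _ fun x => ?_)
  show (Real.sqrt (2 * π))⁻¹ * (x ^ m * Real.exp (-x ^ 2 / 2)) = gaussianPDFReal 0 1 x * x ^ m
  rw [gaussPDFReal_zero_one]
  ring

lemma gauss_map_neg :
    Measure.map (fun x : ℝ => -x) (gaussianReal 0 1) = gaussianReal 0 1 := by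
  have h := gaussianReal_map_const_mul (μ := 0) (v := 1) (-1)
  have h1 : (NNReal.mk ((-1:ℝ)^2) (sq_nonneg _)) = 1 := by
    ext; norm_num
  rw [h1] at h
  simpa [neg_one_mul] using h

lemma gauss_odd {m : ℕ} (hm : Odd m) : ∫ x, x ^ m ∂(gaussianReal 0 1) = 0 := by
  have h : ∫ x, x ^ m ∂(gaussianReal 0 1)
      = ∫ x, (-x) ^ m ∂(gaussianReal 0 1) := by
    conv_lhs => rw [← gauss_map_neg]
    rw [integral_map measurable_neg.aemeasurable
      (by fun_prop : Measurable fun x : ℝ => x ^ m).aestronglyMeasurable]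
  have h2 : ∫ x, (-x) ^ m ∂(gaussianReal 0 1) = - ∫ x, x ^ m ∂(gaussianReal 0 1) := by
    rw [← integral_neg]
    congr 1
    funext x
    rw [hm.neg_pow]
  rw [h2] at h
  linarith

lemma gauss_sq_integral : ∫ x, x ^ 2 ∂(gaussianReal 0 1) = 1 := by
  have hv : ∀ x : ℝ, HasDerivAt (fun y : ℝ => Real.exp (-y^2/2)) (Real.exp (-x^2/2) * (-x)) x := by
    intro x
    have h1 : HasDerivAt (fun y : ℝ => -y^2/2) (-x) x := by
      have h2 := ((hasDerivAt_pow 2 x).neg.div_const 2)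
      exact h2.congr_deriv (by norm_num; ring)
    exact h1.exp
  have hu : ∀ x : ℝ, HasDerivAt (fun y : ℝ => y) (1 : ℝ) x := fun x => hasDerivAt_id x
  have huv' : Integrable ((fun y : ℝ => y) * fun x => Real.exp (-x^2/2) * (-x)) := by
    refine (integrable_pow_mul_gaussAux 2).neg.congr (ae_of_all _ fun x => ?_)
    simp only [Pi.mul_apply, Pi.neg_apply]
    ring
  have hu'v : Integrable ((fun _ : ℝ => (1:ℝ)) * fun x => Real.exp (-x^2/2)) := by
    refine ((integrable_pow_mul_gaussAux 0).congr (ae_of_all _ fun x => ?_))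
    simp only [Pi.mul_apply]
    ring
  have huv : Integrable ((fun y : ℝ => y) * fun x => Real.exp (-x^2/2)) := by
    refine ((integrable_pow_mul_gaussAux 1).congr (ae_of_all _ fun x => ?_))
    simp only [Pi.mul_apply]
    ring
  have hparts := integral_mul_deriv_eq_deriv_mul_of_integrable (fun x _ => hu x) (fun x _ => hv x) huv' hu'v huv
  -- hparts : ∫ x, x * (exp(-x²/2) * (-x)) = - ∫ x, 1 * exp(-x²/2)
  have hg : ∫ x : ℝ, Real.exp (-x^2/2) = Real.sqrt (2 * π) := by
    have := integral_gaussian (1/2 : ℝ)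
    rw [show π / (1/2 : ℝ) = 2 * π by ring] at this
    rw [← this]
    congr 1
    funext x
    congr 1
    ring
  have hsq : ∫ x : ℝ, x ^ 2 * Real.exp (-x^2/2) = Real.sqrt (2 * π) := by
    have e1 : ∫ x : ℝ, x * (Real.exp (-x^2/2) * (-x)) = - ∫ x : ℝ, x ^ 2 * Real.exp (-x^2/2) := by
      rw [← integral_neg]
      congr 1
      funext x
      ring
    have e2 : ∫ x : ℝ, (1:ℝ) * Real.exp (-x^2/2) = Real.sqrt (2 * π) := by
      rw [← hg]
      congr 1
      funext x
      ring
    rw [e1, e2] at hparts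
    linarith
  rw [gauss_integral]
  have : ∫ x : ℝ, gaussianPDFReal 0 1 x * x ^ 2
      = (Real.sqrt (2 * π))⁻¹ * ∫ x : ℝ, x ^ 2 * Real.exp (-x^2/2) := by
    rw [← integral_const_mul]
    congr 1
    funext x
    rw [gaussPDFReal_zero_one]
    ring
  rw [this, hsq, inv_mul_cancel₀]
  positivity

section Aux
variable {Ω : Type*} [MeasurableSpace Ω] {P : Measure Ω}

/-- membership in "zero-integral integrable" class -/
def qZ (P : Measure Ω) (F : Ω → ℝ) : Prop := Integrable F P ∧ ∫ ω, F ω ∂P = 0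

lemma qZ_congr {F G : Ω → ℝ} (h : ∀ ω, F ω = G ω) (hF : qZ P F) : qZ P G := by
  have : F = G := funext h
  exact this ▸ hF

lemma qZ_add {F G : Ω → ℝ} (hF : qZ P F) (hG : qZ P G) : qZ P (fun ω => F ω + G ω) :=
  ⟨hF.1.add hG.1, by rw [integral_add hF.1 hG.1, hF.2, hG.2, add_zero]⟩

lemma qZ_smul (a : ℝ) {F : Ω → ℝ} (hF : qZ P F) : qZ P (fun ω => a * F ω) :=
  ⟨hF.1.const_mul a, by rw [integral_const_mul, hF.2, mul_zero]⟩

lemma qZ_zero : qZ P (fun _ => (0:ℝ)) := ⟨integrable_zero _ _ _, integral_zero _ _⟩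

lemma qZ_sum {ι : Type*} (s : Finset ι) (F : ι → Ω → ℝ) (h : ∀ t ∈ s, qZ P (F t)) :
    qZ P (fun ω => ∑ t ∈ s, F t ω) := by
  classical
  induction s using Finset.induction_on with
  | empty => exact qZ_congr (fun ω => by simp) qZ_zero
  | insert a s hnotmem ih =>
    have h1 := h a (Finset.mem_insert_self a s)
    have h2 := ih (fun t ht => h t (Finset.mem_insert_of_mem ht))
    exact qZ_congr (fun ω => by rw [Finset.sum_insert hnotmem]) (qZ_add h1 h2)

lemma L2_mul_integrable {f g : Ω → ℝ} (hf : MemLp f 2 P) (hg : MemLp g 2 P) :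
    Integrable (fun ω => f ω * g ω) P := by
  have hf2 := hf.integrable_sq
  have hg2 := hg.integrable_sq
  refine (hf2.add hg2).mono' (hf.aestronglyMeasurable.mul hg.aestronglyMeasurable)
    (ae_of_all _ fun ω => ?_)
  have h1 : ‖f ω * g ω‖ = |f ω| * |g ω| := by rw [norm_mul]; rfl
  rw [h1]
  have h2 : ((fun x => f x ^ 2) + fun x => g x ^ 2) ω = f ω ^ 2 + g ω ^ 2 := rfl
  rw [h2]
  nlinarith [sq_nonneg (|f ω| - |g ω|), sq_abs (f ω), sq_abs (g ω), abs_nonneg (f ω),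
    abs_nonneg (g ω)]

end Aux

section Span
variable {Ω : Type*} [MeasurableSpace Ω] {n : ℕ}

/-- atoms: coordinates of `Sm` and of the shocks -/
def qEv (Sm : Ω → Fin n → ℝ) (U : ℕ → Ω → Fin n → ℝ) : (Fin n) ⊕ (ℕ × Fin n) → Ω → ℝ :=
  Sum.elim (fun c ω => Sm ω c) (fun p ω => U p.1 ω p.2)

lemma qvarS_mem_span (Φ1 Str : Matrix (Fin n) (Fin n) ℝ) (Sm : Ω → Fin n → ℝ)
    (U : ℕ → Ω → Fin n → ℝ) (k : ℕ) :
    ∀ a, (fun ω => qvarS Φ1 Str (Sm ω) (fun l => U l ω) k a)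
      ∈ Submodule.span ℝ (Set.range (qEv Sm U)) := by
  induction k with
  | zero =>
    intro a
    have hrew : (fun ω => qvarS Φ1 Str (Sm ω) (fun l => U l ω) 0 a)
        = ∑ c, (Φ1 a c • qEv Sm U (Sum.inl c) + Str a c • qEv Sm U (Sum.inr (0, c))) := by
      funext ω
      simp [qvarS, Matrix.mulVec, dotProduct, qEv, Finset.sum_apply, Pi.add_apply,
        Pi.smul_apply, smul_eq_mul, Finset.sum_add_distrib]
    rw [hrew]
    exact Submodule.sum_mem _ fun c _ => Submodule.add_mem _
      (Submodule.smul_mem _ _ (Submodule.subset_span ⟨_, rfl⟩))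
      (Submodule.smul_mem _ _ (Submodule.subset_span ⟨_, rfl⟩))
  | succ k ih =>
    intro a
    have hrew : (fun ω => qvarS Φ1 Str (Sm ω) (fun l => U l ω) (k+1) a)
        = ∑ c, (Φ1 a c • (fun ω => qvarS Φ1 Str (Sm ω) (fun l => U l ω) k c)
            + Str a c • qEv Sm U (Sum.inr (k+1, c))) := by
      funext ω
      simp [qvarS, Matrix.mulVec, dotProduct, qEv, Finset.sum_apply, Pi.add_apply,
        Pi.smul_apply, smul_eq_mul, Finset.sum_add_distrib]
    rw [hrew]
    exact Submodule.sum_mem _ fun c _ => Submodule.add_mem _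
      (Submodule.smul_mem _ _ (ih c))
      (Submodule.smul_mem _ _ (Submodule.subset_span ⟨_, rfl⟩))

/-- abstract KB: closure of atom property under span, one span factor -/
lemma qKB (P : Measure Ω) (Sm : Ω → Fin n → ℝ) (U : ℕ → Ω → Fin n → ℝ) (w : Ω → ℝ)
    (hat : ∀ x, qZ P (fun ω => qEv Sm U x ω * w ω)) :
    ∀ f ∈ Submodule.span ℝ (Set.range (qEv Sm U)), qZ P (fun ω => f ω * w ω) := by
  intro f hf
  induction hf using Submodule.span_induction with
  | mem x hx =>
    obtain ⟨x, rfl⟩ := hx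
    exact hat x
  | zero => exact qZ_congr (fun ω => by simp) qZ_zero
  | add x y hx hy hhx hhy =>
    exact qZ_congr (fun ω => by simp [Pi.add_apply]; ring) (qZ_add hhx hhy)
  | smul a x hx hhx =>
    exact qZ_congr (fun ω => by simp [Pi.smul_apply, smul_eq_mul]; ring) (qZ_smul a hhx)

/-- abstract KA: two span factors -/
lemma qKA (P : Measure Ω) (Sm : Ω → Fin n → ℝ) (U : ℕ → Ω → Fin n → ℝ) (w : Ω → ℝ)
    (hat : ∀ x y, qZ P (fun ω => qEv Sm U x ω * qEv Sm U y ω * w ω)) :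
    ∀ f ∈ Submodule.span ℝ (Set.range (qEv Sm U)),
      ∀ g ∈ Submodule.span ℝ (Set.range (qEv Sm U)),
        qZ P (fun ω => f ω * g ω * w ω) := by
  intro f hf
  induction hf using Submodule.span_induction with
  | mem x hx =>
    obtain ⟨x, rfl⟩ := hx
    intro g hg
    induction hg using Submodule.span_induction with
    | mem y hy =>
      obtain ⟨y, rfl⟩ := hy
      exact hat x y
    | zero => exact qZ_congr (fun ω => by simp) qZ_zero
    | add y z hy hz hhy hhz =>
      exact qZ_congr (fun ω => by simp [Pi.add_apply]; ring) (qZ_add hhy hhz)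
    | smul a y hy hhy =>
      exact qZ_congr (fun ω => by simp [Pi.smul_apply, smul_eq_mul]; ring) (qZ_smul a hhy)
  | zero => intro g hg; exact qZ_congr (fun ω => by simp) qZ_zero
  | add x y hx hy hhx hhy =>
    intro g hg
    exact qZ_congr (fun ω => by simp [Pi.add_apply]; ring) (qZ_add (hhx g hg) (hhy g hg))
  | smul a x hx hhx =>
    intro g hg
    exact qZ_congr (fun ω => by simp [Pi.smul_apply, smul_eq_mul]; ring) (qZ_smul a (hhx g hg))

end Span


end QlpAux

/-- In the QVAR(1,1) model with random initial vectors `(Ym, Sm)`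
(`E[Sm] = 0` componentwise, `E[‖Sm‖²] < ∞`, `E[‖Ym‖] < ∞`) and shocks
`U 0, U 1, …` whose components are jointly i.i.d. standard Gaussian and independent of
`(Ym, Sm)`, the population coefficient of a linear local projection of each outcome on
each observed structural shock satisfies `E[(y_h)_j (U₀)_i] = (Φ₁^h Σ_tr)_{j i}`: it
coincides with the impulse response of the linear VAR(1) model
`y_t = Φ₁ y_{t−1} + Σ_tr u_t`, so the linear local projection captures none of the
nonlinearity of the QVAR(1,1) model. -/
theorem qvar_linear_lp_fails
    {Ω : Type*} [MeasurableSpace Ω] (P : Measure Ω) [IsProbabilityMeasure P]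
    (n : ℕ) (hn : 1 ≤ n)
    (Φ1 Γ Str : Matrix (Fin n) (Fin n) ℝ)
    (Q : Matrix (Fin n) (Fin n) ℝ →ₗ[ℝ] (Fin n → ℝ))
    (h : ℕ) (hh : 1 ≤ h)
    (Ym Sm : Ω → (Fin n → ℝ))
    (hYmeas : Measurable Ym) (hSmeas : Measurable Sm)
    (hSmean : ∀ i, ∫ ω, Sm ω i ∂P = 0)
    (hS2 : MemLp Sm 2 P)
    (hYint : Integrable Ym P)
    (U : ℕ → Ω → (Fin n → ℝ))
    (hUmeas : ∀ k, Measurable (U k))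
    (hUdist : ∀ k i, Measure.map (fun ω => U k ω i) P = gaussianReal 0 1)
    (hUiid : iIndepFun
      (fun (p : ℕ × Fin n) ω => U p.1 ω p.2) P)
    (hindep : IndepFun (fun ω => (Ym ω, Sm ω)) (fun ω (k : ℕ) => U k ω) P) :
    ∀ i j : Fin n,
      ∫ ω, qvarY Φ1 Γ Str Q (Sm ω) (Ym ω) (fun k => U k ω) h j * U 0 ω i ∂P
        = (Φ1 ^ h * Str) j i := by
  intro i j
  classical
  -- measurability of shock coordinates
  have hVmeas : ∀ p : ℕ × Fin n, Measurable (fun ω => U p.1 ω p.2) :=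
    fun p => (measurable_pi_apply p.2).comp (hUmeas p.1)
  -- moment transfer from the gaussian law
  have hVint : ∀ (p : ℕ × Fin n) (m : ℕ), Integrable (fun ω => U p.1 ω p.2 ^ m) P := by
    intro p m
    have h1 : Integrable (fun x : ℝ => x ^ m) (gaussianReal 0 1) := gauss_integrable_pow m
    rw [← hUdist p.1 p.2] at h1
    exact (integrable_map_measure
      (by fun_prop : Measurable fun x : ℝ => x ^ m).aestronglyMeasurable
      (hVmeas p).aemeasurable).mp h1
  have hVmom : ∀ (p : ℕ × Fin n) (m : ℕ),
      ∫ ω, U p.1 ω p.2 ^ m ∂P = ∫ x, x ^ m ∂(gaussianReal 0 1) := by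
    intro p m
    rw [← hUdist p.1 p.2, integral_map (hVmeas p).aemeasurable
      (by fun_prop : Measurable fun x : ℝ => x ^ m).aestronglyMeasurable]
  have hV1int : ∀ p : ℕ × Fin n, Integrable (fun ω => U p.1 ω p.2) P := by
    intro p
    have h1 := hVint p 1
    simpa using h1
  have hV1 : ∀ p : ℕ × Fin n, ∫ ω, U p.1 ω p.2 ∂P = 0 := by
    intro p
    have h1 := hVmom p 1
    have h2 : ∫ x, x ^ 1 ∂(gaussianReal 0 1) = 0 := gauss_odd ⟨0, by ring⟩
    have h3 := h1.trans h2
    simpa using h3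
  have hV2int : ∀ p : ℕ × Fin n, Integrable (fun ω => U p.1 ω p.2 * U p.1 ω p.2) P := by
    intro p
    exact (hVint p 2).congr (ae_of_all _ fun ω => by ring)
  have hV2 : ∀ p : ℕ × Fin n, ∫ ω, U p.1 ω p.2 * U p.1 ω p.2 ∂P = 1 := by
    intro p
    have e : (fun ω => U p.1 ω p.2 * U p.1 ω p.2) = fun ω => U p.1 ω p.2 ^ 2 := by
      funext ω; ring
    rw [e, hVmom p 2, gauss_sq_integral]
  -- pairwise independence of distinct shock coordinates
  have hVVind : ∀ p q : ℕ × Fin n, p ≠ q →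
      IndepFun (fun ω => U p.1 ω p.2) (fun ω => U q.1 ω q.2) P :=
    fun p q hpq => hUiid.indepFun hpq
  have zVVint : ∀ p q : ℕ × Fin n, Integrable (fun ω => U p.1 ω p.2 * U q.1 ω q.2) P := by
    intro p q
    by_cases hpq : p = q
    · subst hpq; exact hV2int p
    · exact (hVVind p q hpq).integrable_mul (hV1int p) (hV1int q)
  have zVVeq : ∀ p q : ℕ × Fin n,
      ∫ ω, U p.1 ω p.2 * U q.1 ω q.2 ∂P = if p = q then 1 else 0 := by
    intro p q
    by_cases hpq : p = q
    · subst hpq; rw [if_pos rfl]; exact hV2 p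
    · rw [if_neg hpq]
      have h2 : ∫ ω, U p.1 ω p.2 * U q.1 ω q.2 ∂P
          = (∫ ω, U p.1 ω p.2 ∂P) * ∫ ω, U q.1 ω q.2 ∂P :=
        (hVVind p q hpq).integral_mul_eq_mul_integral (hV1int p).aestronglyMeasurable (hV1int q).aestronglyMeasurable
      rw [h2, hV1, hV1, mul_zero]
  have zVVne : ∀ p q : ℕ × Fin n, p ≠ q → qZ P (fun ω => U p.1 ω p.2 * U q.1 ω q.2) := by
    intro p q hpq
    exact ⟨zVVint p q, by rw [zVVeq p q, if_neg hpq]⟩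
  -- triple products of shock coordinates
  have zsqV : ∀ p q : ℕ × Fin n, p ≠ q →
      qZ P (fun ω => U p.1 ω p.2 * U p.1 ω p.2 * U q.1 ω q.2) := by
    intro p q hpq
    have ind : IndepFun (fun ω => U p.1 ω p.2 * U p.1 ω p.2) (fun ω => U q.1 ω q.2) P :=
      (hVVind p q hpq).comp (by fun_prop : Measurable fun x : ℝ => x * x) measurable_id
    refine ⟨ind.integrable_mul (hV2int p) (hV1int q), ?_⟩
    have h2 : ∫ ω, U p.1 ω p.2 * U p.1 ω p.2 * U q.1 ω q.2 ∂P
        = (∫ ω, U p.1 ω p.2 * U p.1 ω p.2 ∂P) * ∫ ω, U q.1 ω q.2 ∂P :=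
      ind.integral_mul_eq_mul_integral (hV2int p).aestronglyMeasurable (hV1int q).aestronglyMeasurable
    rw [h2, hV1 q, mul_zero]
  have zVVV : ∀ p q r : ℕ × Fin n,
      qZ P (fun ω => U p.1 ω p.2 * U q.1 ω q.2 * U r.1 ω r.2) := by
    intro p q r
    by_cases hpq : p = q
    · subst hpq
      by_cases hpr : p = r
      · subst hpr
        constructor
        · exact (hVint p 3).congr (ae_of_all _ fun ω => by ring)
        · have e : (fun ω => U p.1 ω p.2 * U p.1 ω p.2 * U p.1 ω p.2)
              = fun ω => U p.1 ω p.2 ^ 3 := by funext ω; ring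
          have h2 : ∫ x, x ^ 3 ∂(gaussianReal 0 1) = 0 := gauss_odd ⟨1, by ring⟩
          rw [e, hVmom p 3, h2]
      · exact zsqV p r hpr
    · by_cases hpr : p = r
      · subst hpr
        exact qZ_congr (fun ω => by ring) (zsqV p q hpq)
      · by_cases hqr : q = r
        · subst hqr
          exact qZ_congr (fun ω => by ring) (zsqV q p (Ne.symm hpq))
        · have ind : IndepFun (fun ω => U p.1 ω p.2 * U q.1 ω q.2)
              (fun ω => U r.1 ω r.2) P :=
            (hUiid.indepFun_prodMk (fun s => hVmeas s) p q r hpr hqr).comp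
              (by fun_prop : Measurable fun z : ℝ × ℝ => z.1 * z.2) measurable_id
          refine ⟨ind.integrable_mul (zVVint p q) (hV1int r), ?_⟩
          have h2 : ∫ ω, U p.1 ω p.2 * U q.1 ω q.2 * U r.1 ω r.2 ∂P
              = (∫ ω, U p.1 ω p.2 * U q.1 ω q.2 ∂P) * ∫ ω, U r.1 ω r.2 ∂P :=
            ind.integral_mul_eq_mul_integral (zVVint p q).aestronglyMeasurable (hV1int r).aestronglyMeasurable
          rw [h2, hV1 r, mul_zero]
  -- integrability of initial-condition coordinates
  have hSl2 : ∀ c : Fin n, MemLp (fun ω => Sm ω c) 2 P := by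
    intro c
    exact (ContinuousLinearMap.proj (R := ℝ) (φ := fun _ : Fin n => ℝ) c).comp_memLp' hS2
  have intS : ∀ c : Fin n, Integrable (fun ω => Sm ω c) P := fun c =>
    memLp_one_iff_integrable.mp ((hSl2 c).mono_exponent (by norm_num))
  have intSS : ∀ c d : Fin n, Integrable (fun ω => Sm ω c * Sm ω d) P := fun c d =>
    L2_mul_integrable (hSl2 c) (hSl2 d)
  have intY : ∀ a : Fin n, Integrable (fun ω => Ym ω a) P := by
    intro a
    refine hYint.norm.mono' ((measurable_pi_apply a).comp hYmeas).aestronglyMeasurable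
      (ae_of_all _ fun ω => ?_)
    simpa using norm_le_pi_norm (Ym ω) a
  -- independence of initial conditions from shocks
  have hbase : ∀ (F : (Fin n → ℝ) × (Fin n → ℝ) → ℝ) (G : (ℕ → Fin n → ℝ) → ℝ),
      Measurable F → Measurable G →
      IndepFun (fun ω => F (Ym ω, Sm ω)) (fun ω => G (fun k => U k ω)) P :=
    fun F G hF hG => hindep.comp hF hG
  have zSV : ∀ (c : Fin n) (p : ℕ × Fin n), qZ P (fun ω => Sm ω c * U p.1 ω p.2) := by
    intro c p
    have ind : IndepFun (fun ω => Sm ω c) (fun ω => U p.1 ω p.2) P :=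
      hbase (fun z => z.2 c) (fun u => u p.1 p.2) (by fun_prop) (by fun_prop)
    refine ⟨ind.integrable_mul (intS c) (hV1int p), ?_⟩
    have h2 : ∫ ω, Sm ω c * U p.1 ω p.2 ∂P
        = (∫ ω, Sm ω c ∂P) * ∫ ω, U p.1 ω p.2 ∂P :=
      ind.integral_mul_eq_mul_integral (intS c).aestronglyMeasurable (hV1int p).aestronglyMeasurable
    rw [h2, hSmean c, zero_mul]
  have zSVV : ∀ (c : Fin n) (p q : ℕ × Fin n),
      qZ P (fun ω => Sm ω c * U p.1 ω p.2 * U q.1 ω q.2) := by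
    intro c p q
    have ind : IndepFun (fun ω => Sm ω c) (fun ω => U p.1 ω p.2 * U q.1 ω q.2) P :=
      hbase (fun z => z.2 c) (fun u => u p.1 p.2 * u q.1 q.2) (by fun_prop) (by fun_prop)
    have hint : Integrable (fun ω => Sm ω c * (U p.1 ω p.2 * U q.1 ω q.2)) P :=
      ind.integrable_mul (intS c) (zVVint p q)
    constructor
    · exact hint.congr (ae_of_all _ fun ω => by ring)
    · have e : (fun ω => Sm ω c * U p.1 ω p.2 * U q.1 ω q.2)
          = fun ω => Sm ω c * (U p.1 ω p.2 * U q.1 ω q.2) := by funext ω; ring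
      have h2 : ∫ ω, Sm ω c * (U p.1 ω p.2 * U q.1 ω q.2) ∂P
          = (∫ ω, Sm ω c ∂P) * ∫ ω, U p.1 ω p.2 * U q.1 ω q.2 ∂P :=
        ind.integral_mul_eq_mul_integral (intS c).aestronglyMeasurable (zVVint p q).aestronglyMeasurable
      rw [e, h2, hSmean c, zero_mul]
  have zSSV : ∀ (c d : Fin n) (p : ℕ × Fin n),
      qZ P (fun ω => Sm ω c * Sm ω d * U p.1 ω p.2) := by
    intro c d p
    have ind : IndepFun (fun ω => Sm ω c * Sm ω d) (fun ω => U p.1 ω p.2) P :=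
      hbase (fun z => z.2 c * z.2 d) (fun u => u p.1 p.2) (by fun_prop) (by fun_prop)
    refine ⟨ind.integrable_mul (intSS c d) (hV1int p), ?_⟩
    have h2 : ∫ ω, Sm ω c * Sm ω d * U p.1 ω p.2 ∂P
        = (∫ ω, Sm ω c * Sm ω d ∂P) * ∫ ω, U p.1 ω p.2 ∂P :=
      ind.integral_mul_eq_mul_integral (intSS c d).aestronglyMeasurable (hV1int p).aestronglyMeasurable
    rw [h2, hV1 p, mul_zero]
  have zYV : ∀ (a : Fin n) (p : ℕ × Fin n), qZ P (fun ω => Ym ω a * U p.1 ω p.2) := by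
    intro a p
    have ind : IndepFun (fun ω => Ym ω a) (fun ω => U p.1 ω p.2) P :=
      hbase (fun z => z.1 a) (fun u => u p.1 p.2) (by fun_prop) (by fun_prop)
    refine ⟨ind.integrable_mul (intY a) (hV1int p), ?_⟩
    have h2 : ∫ ω, Ym ω a * U p.1 ω p.2 ∂P
        = (∫ ω, Ym ω a ∂P) * ∫ ω, U p.1 ω p.2 ∂P :=
      ind.integral_mul_eq_mul_integral (intY a).aestronglyMeasurable (hV1int p).aestronglyMeasurable
    rw [h2, hV1 p, mul_zero]
  -- expansion of the quadratic term
  have hQexp : ∀ (v : Fin n → ℝ) (jj : Fin n), Q (Matrix.vecMulVec v v) jj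
      = ∑ a, ∑ b, Q (Matrix.single a b 1) jj * (v a * v b) := by
    intro v jj
    have e1 : ∀ a b : Fin n, Matrix.single a b (Matrix.vecMulVec v v a b)
        = (v a * v b) • Matrix.single a b (1:ℝ) := by
      intro a b
      rw [Matrix.smul_single, smul_eq_mul, mul_one, Matrix.vecMulVec_apply]
    calc Q (Matrix.vecMulVec v v) jj
        = Q (∑ a, ∑ b, Matrix.single a b (Matrix.vecMulVec v v a b)) jj := by
          rw [← Matrix.matrix_eq_sum_single]
      _ = ∑ a, ∑ b, Q (Matrix.single a b 1) jj * (v a * v b) := by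
          simp only [e1, map_sum, _root_.map_smul, Finset.sum_apply, Pi.smul_apply, smul_eq_mul]
          exact Finset.sum_congr rfl fun a _ => Finset.sum_congr rfl fun b _ => by ring
  -- span machinery atoms for KA with weight U 0 i
  have KAH : ∀ x y : (Fin n) ⊕ (ℕ × Fin n),
      qZ P (fun ω => qEv Sm U x ω * qEv Sm U y ω * U 0 ω i) := by
    intro x y
    rcases x with c | p <;> rcases y with d | q
    · exact qZ_congr (fun ω => by simp only [qEv, Sum.elim_inl]) (zSSV c d (0, i))
    · exact qZ_congr (fun ω => by simp only [qEv, Sum.elim_inl, Sum.elim_inr])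
        (zSVV c q (0, i))
    · exact qZ_congr (fun ω => by simp only [qEv, Sum.elim_inl, Sum.elim_inr]; ring)
        (zSVV d p (0, i))
    · exact qZ_congr (fun ω => by simp only [qEv, Sum.elim_inr]) (zVVV p q (0, i))
  have KA := qKA P Sm U (fun ω => U 0 ω i) KAH
  have KBH : ∀ (q : ℕ × Fin n) (x : (Fin n) ⊕ (ℕ × Fin n)),
      qZ P (fun ω => qEv Sm U x ω * (U q.1 ω q.2 * U 0 ω i)) := by
    intro q x
    rcases x with c | p
    · exact qZ_congr (fun ω => by simp only [qEv, Sum.elim_inl]; ring) (zSVV c q (0, i))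
    · exact qZ_congr (fun ω => by simp only [qEv, Sum.elim_inr]; ring) (zVVV p q (0, i))
  have KB : ∀ (q : ℕ × Fin n), ∀ f ∈ Submodule.span ℝ (Set.range (qEv Sm U)),
      qZ P (fun ω => f ω * (U q.1 ω q.2 * U 0 ω i)) := fun q =>
    qKB P Sm U (fun ω => U q.1 ω q.2 * U 0 ω i) (KBH q)
  -- span membership of relevant processes
  have hSmem := qvarS_mem_span (Ω := Ω) Φ1 Str Sm U
  have hGammaMem : ∀ (k : ℕ) (jj : Fin n),
      (fun ω => Γ.mulVec (qvarS Φ1 Str (Sm ω) (fun l => U l ω) k) jj)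
      ∈ Submodule.span ℝ (Set.range (qEv Sm U)) := by
    intro k jj
    have hrew : (fun ω => Γ.mulVec (qvarS Φ1 Str (Sm ω) (fun l => U l ω) k) jj)
        = ∑ d, Γ jj d • (fun ω => qvarS Φ1 Str (Sm ω) (fun l => U l ω) k d) := by
      funext ω
      simp [Matrix.mulVec, dotProduct, Finset.sum_apply, Pi.smul_apply, smul_eq_mul]
    rw [hrew]
    exact Submodule.sum_mem _ fun d _ => Submodule.smul_mem _ _ (hSmem k d)
  have hGammaSmMem : ∀ jj : Fin n, (fun ω => Γ.mulVec (Sm ω) jj)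
      ∈ Submodule.span ℝ (Set.range (qEv Sm U)) := by
    intro jj
    have hrew : (fun ω => Γ.mulVec (Sm ω) jj) = ∑ d, Γ jj d • qEv Sm U (Sum.inl d) := by
      funext ω
      simp [Matrix.mulVec, dotProduct, qEv, Finset.sum_apply, Pi.smul_apply, smul_eq_mul]
    rw [hrew]
    exact Submodule.sum_mem _ fun d _ => Submodule.smul_mem _ _
      (Submodule.subset_span ⟨_, rfl⟩)

  -- combining lemmas inline: main induction
  have main : ∀ (k : ℕ) (jj : Fin n),
      Integrable (fun ω => qvarY Φ1 Γ Str Q (Sm ω) (Ym ω) (fun l => U l ω) k jj * U 0 ω i) P ∧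
      ∫ ω, qvarY Φ1 Γ Str Q (Sm ω) (Ym ω) (fun l => U l ω) k jj * U 0 ω i ∂P
        = (Φ1 ^ k * Str) jj i := by
    intro k
    induction k with
    | zero =>
      intro jj
      -- pointwise identity for the Hadamard piece
      have e3 : ∀ ω, (1 + Γ.mulVec (Sm ω) jj) * Str.mulVec (U 0 ω) jj * U 0 ω i
          = (∑ c, Str jj c * (U 0 ω c * U 0 ω i))
            + ∑ c, Γ.mulVec (Sm ω) jj * (Str jj c * (U 0 ω c * U 0 ω i)) := by
        intro ω
        have eS : Str.mulVec (U 0 ω) jj = ∑ c, Str jj c * U 0 ω c := rfl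
        rw [eS, add_mul, one_mul, add_mul, Finset.sum_mul, Finset.mul_sum, Finset.sum_mul]
        congr 1
        · exact Finset.sum_congr rfl fun c _ => by ring
        · exact Finset.sum_congr rfl fun c _ => by ring
      have hsplit : (fun ω => qvarY Φ1 Γ Str Q (Sm ω) (Ym ω) (fun l => U l ω) 0 jj * U 0 ω i)
          = fun ω => Φ1.mulVec (Ym ω) jj * U 0 ω i
            + (Q (Matrix.vecMulVec (Sm ω) (Sm ω)) jj * U 0 ω i
            + ((∑ c, Str jj c * (U 0 ω c * U 0 ω i))
            + ∑ c, Γ.mulVec (Sm ω) jj * (Str jj c * (U 0 ω c * U 0 ω i)))) := by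
        funext ω
        simp only [qvarY, Pi.add_apply]
        rw [add_mul, add_mul, e3 ω]
        ring
      -- the four pieces
      have hz1 : qZ P (fun ω => Φ1.mulVec (Ym ω) jj * U 0 ω i) := by
        refine qZ_congr (F := fun ω => ∑ a, Φ1 jj a * (Ym ω a * U 0 ω i)) (fun ω => ?_)
          (qZ_sum Finset.univ _ fun a _ => qZ_smul _ (zYV a (0, i)))
        have eA : Φ1.mulVec (Ym ω) jj = ∑ a, Φ1 jj a * Ym ω a := rfl
        rw [eA, Finset.sum_mul]
        exact Finset.sum_congr rfl fun a _ => by ring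
      have hz2 : qZ P (fun ω => Q (Matrix.vecMulVec (Sm ω) (Sm ω)) jj * U 0 ω i) := by
        refine qZ_congr
          (F := fun ω => ∑ a, ∑ b,
            Q (Matrix.single a b 1) jj * (Sm ω a * Sm ω b * U 0 ω i))
          (fun ω => ?_)
          (qZ_sum Finset.univ _ fun a _ => qZ_sum Finset.univ _ fun b _ =>
            qZ_smul _ (zSSV a b (0, i)))
        rw [hQexp (Sm ω) jj, Finset.sum_mul]
        refine Finset.sum_congr rfl fun a _ => ?_
        rw [Finset.sum_mul]
        exact Finset.sum_congr rfl fun b _ => by ring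
      have hz3b : qZ P (fun ω => ∑ c, Γ.mulVec (Sm ω) jj * (Str jj c * (U 0 ω c * U 0 ω i))) := by
        refine qZ_sum Finset.univ _ fun c _ => ?_
        refine qZ_congr (F := fun ω => Str jj c
          * ((fun ω => Γ.mulVec (Sm ω) jj) ω * (U 0 ω c * U 0 ω i))) (fun ω => by ring) ?_
        exact qZ_smul _ (KB (0, c) _ (hGammaSmMem jj))
      have int3a : Integrable (fun ω => ∑ c, Str jj c * (U 0 ω c * U 0 ω i)) P :=
        integrable_finset_sum _ fun c _ => ((zVVint (0, c) (0, i)).const_mul _)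
      have int3aval : ∫ ω, ∑ c, Str jj c * (U 0 ω c * U 0 ω i) ∂P = Str jj i := by
        rw [integral_finset_sum _ fun c _ => ((zVVint (0, c) (0, i)).const_mul _)]
        have e : ∀ c : Fin n, ∫ ω, Str jj c * (U 0 ω c * U 0 ω i) ∂P
            = Str jj c * if c = i then 1 else 0 := by
          intro c
          rw [integral_const_mul]
          congr 1
          have h2 : ∫ ω, U 0 ω c * U 0 ω i ∂P = if c = i then 1 else 0 := by
            simpa [Prod.ext_iff] using zVVeq (0, c) (0, i)
          exact h2
        rw [Finset.sum_congr rfl fun c _ => e c]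
        simp
      -- combine
      have i34 : Integrable (fun ω => (∑ c, Str jj c * (U 0 ω c * U 0 ω i))
          + ∑ c, Γ.mulVec (Sm ω) jj * (Str jj c * (U 0 ω c * U 0 ω i))) P :=
        int3a.add hz3b.1
      have i234 : Integrable (fun ω => Q (Matrix.vecMulVec (Sm ω) (Sm ω)) jj * U 0 ω i
          + ((∑ c, Str jj c * (U 0 ω c * U 0 ω i))
          + ∑ c, Γ.mulVec (Sm ω) jj * (Str jj c * (U 0 ω c * U 0 ω i)))) P :=
        hz2.1.add i34
      constructor
      · rw [hsplit]
        exact hz1.1.add i234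
      · rw [hsplit, integral_add hz1.1 i234, integral_add hz2.1 i34,
          integral_add int3a hz3b.1, hz1.2, hz2.2, hz3b.2, int3aval]
        simp
    | succ k ih =>
      intro jj
      have e3 : ∀ ω, (1 + Γ.mulVec (qvarS Φ1 Str (Sm ω) (fun l => U l ω) k) jj)
            * Str.mulVec (U (k+1) ω) jj * U 0 ω i
          = (∑ c, Str jj c * (U (k+1) ω c * U 0 ω i))
            + ∑ c, Γ.mulVec (qvarS Φ1 Str (Sm ω) (fun l => U l ω) k) jj
                * (Str jj c * (U (k+1) ω c * U 0 ω i)) := by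
        intro ω
        have eS : Str.mulVec (U (k+1) ω) jj = ∑ c, Str jj c * U (k+1) ω c := rfl
        rw [eS, add_mul, one_mul, add_mul, Finset.sum_mul, Finset.mul_sum, Finset.sum_mul]
        congr 1
        · exact Finset.sum_congr rfl fun c _ => by ring
        · exact Finset.sum_congr rfl fun c _ => by ring
      have hsplit : (fun ω =>
            qvarY Φ1 Γ Str Q (Sm ω) (Ym ω) (fun l => U l ω) (k+1) jj * U 0 ω i)
          = fun ω => Φ1.mulVec (qvarY Φ1 Γ Str Q (Sm ω) (Ym ω) (fun l => U l ω) k) jj * U 0 ω i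
            + (Q (Matrix.vecMulVec (qvarS Φ1 Str (Sm ω) (fun l => U l ω) k)
                  (qvarS Φ1 Str (Sm ω) (fun l => U l ω) k)) jj * U 0 ω i
            + ((∑ c, Str jj c * (U (k+1) ω c * U 0 ω i))
            + ∑ c, Γ.mulVec (qvarS Φ1 Str (Sm ω) (fun l => U l ω) k) jj
                * (Str jj c * (U (k+1) ω c * U 0 ω i)))) := by
        funext ω
        simp only [qvarY, Pi.add_apply]
        rw [add_mul, add_mul, e3 ω]
        ring
      -- piece 1 : the VAR part, carries the value
      have int1 : Integrable (fun ω => ∑ a, Φ1 jj a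
          * (qvarY Φ1 Γ Str Q (Sm ω) (Ym ω) (fun l => U l ω) k a * U 0 ω i)) P :=
        integrable_finset_sum _ fun a _ => ((ih a).1.const_mul _)
      have int1val : ∫ ω, ∑ a, Φ1 jj a
          * (qvarY Φ1 Γ Str Q (Sm ω) (Ym ω) (fun l => U l ω) k a * U 0 ω i) ∂P
          = (Φ1 ^ (k+1) * Str) jj i := by
        rw [integral_finset_sum _ fun a _ => ((ih a).1.const_mul _)]
        have e : ∀ a : Fin n, ∫ ω, Φ1 jj a
            * (qvarY Φ1 Γ Str Q (Sm ω) (Ym ω) (fun l => U l ω) k a * U 0 ω i) ∂P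
            = Φ1 jj a * (Φ1 ^ k * Str) a i := by
          intro a
          rw [integral_const_mul, (ih a).2]
        rw [Finset.sum_congr rfl fun a _ => e a]
        rw [pow_succ', Matrix.mul_assoc, Matrix.mul_apply]
      have e1 : ∀ ω, Φ1.mulVec (qvarY Φ1 Γ Str Q (Sm ω) (Ym ω) (fun l => U l ω) k) jj
            * U 0 ω i
          = ∑ a, Φ1 jj a
            * (qvarY Φ1 Γ Str Q (Sm ω) (Ym ω) (fun l => U l ω) k a * U 0 ω i) := by
        intro ω
        have eA : Φ1.mulVec (qvarY Φ1 Γ Str Q (Sm ω) (Ym ω) (fun l => U l ω) k) jj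
            = ∑ a, Φ1 jj a * qvarY Φ1 Γ Str Q (Sm ω) (Ym ω) (fun l => U l ω) k a := rfl
        rw [eA, Finset.sum_mul]
        exact Finset.sum_congr rfl fun a _ => by ring
      have int1' : Integrable (fun ω =>
          Φ1.mulVec (qvarY Φ1 Γ Str Q (Sm ω) (Ym ω) (fun l => U l ω) k) jj * U 0 ω i) P := by
        refine int1.congr (ae_of_all _ fun ω => (e1 ω).symm)
      have int1val' : ∫ ω,
          Φ1.mulVec (qvarY Φ1 Γ Str Q (Sm ω) (Ym ω) (fun l => U l ω) k) jj * U 0 ω i ∂P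
          = (Φ1 ^ (k+1) * Str) jj i := by
        rw [← int1val]
        exact integral_congr_ae (ae_of_all _ fun ω => e1 ω)
      -- piece 2 : quadratic part, zero
      have hz2 : qZ P (fun ω => Q (Matrix.vecMulVec (qvarS Φ1 Str (Sm ω) (fun l => U l ω) k)
          (qvarS Φ1 Str (Sm ω) (fun l => U l ω) k)) jj * U 0 ω i) := by
        refine qZ_congr
          (F := fun ω => ∑ a, ∑ b, Q (Matrix.single a b 1) jj
            * (qvarS Φ1 Str (Sm ω) (fun l => U l ω) k a
              * qvarS Φ1 Str (Sm ω) (fun l => U l ω) k b * U 0 ω i))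
          (fun ω => ?_)
          (qZ_sum Finset.univ _ fun a _ => qZ_sum Finset.univ _ fun b _ =>
            qZ_smul _ (KA _ (hSmem k a) _ (hSmem k b)))
        rw [hQexp (qvarS Φ1 Str (Sm ω) (fun l => U l ω) k) jj, Finset.sum_mul]
        refine Finset.sum_congr rfl fun a _ => ?_
        rw [Finset.sum_mul]
        exact Finset.sum_congr rfl fun b _ => by ring
      -- piece 3a : zero because k+1 ≠ 0
      have hz3a : qZ P (fun ω => ∑ c, Str jj c * (U (k+1) ω c * U 0 ω i)) := by
        refine qZ_sum Finset.univ _ fun c _ => qZ_smul _ ?_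
        exact zVVne (k+1, c) (0, i) (by simp)
      -- piece 3b : zero by span argument
      have hz3b : qZ P (fun ω => ∑ c, Γ.mulVec (qvarS Φ1 Str (Sm ω) (fun l => U l ω) k) jj
          * (Str jj c * (U (k+1) ω c * U 0 ω i))) := by
        refine qZ_sum Finset.univ _ fun c _ => ?_
        refine qZ_congr (F := fun ω => Str jj c
          * ((fun ω => Γ.mulVec (qvarS Φ1 Str (Sm ω) (fun l => U l ω) k) jj) ω
            * (U (k+1) ω c * U 0 ω i))) (fun ω => by ring) ?_
        exact qZ_smul _ (KB (k+1, c) _ (hGammaMem k jj))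
      -- combine
      have i34 : Integrable (fun ω => (∑ c, Str jj c * (U (k+1) ω c * U 0 ω i))
          + ∑ c, Γ.mulVec (qvarS Φ1 Str (Sm ω) (fun l => U l ω) k) jj
              * (Str jj c * (U (k+1) ω c * U 0 ω i))) P :=
        hz3a.1.add hz3b.1
      have i234 : Integrable (fun ω =>
          Q (Matrix.vecMulVec (qvarS Φ1 Str (Sm ω) (fun l => U l ω) k)
            (qvarS Φ1 Str (Sm ω) (fun l => U l ω) k)) jj * U 0 ω i
          + ((∑ c, Str jj c * (U (k+1) ω c * U 0 ω i))
          + ∑ c, Γ.mulVec (qvarS Φ1 Str (Sm ω) (fun l => U l ω) k) jj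
              * (Str jj c * (U (k+1) ω c * U 0 ω i)))) P :=
        hz2.1.add i34
      constructor
      · rw [hsplit]
        exact int1'.add i234
      · rw [hsplit, integral_add int1' i234, integral_add hz2.1 i34,
          integral_add hz3a.1 hz3b.1, int1val', hz2.2, hz3a.2, hz3b.2]
        ring
  exact (main h j).2
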